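/- Let G be a claw-free graph with maximum degree at most Δ and independence number i*(G) ≥ n/(Δ+1) where n is the number of vertices. Let Y be the size of a random independent set from the hard-core model at fugacity λ. Then for all δ ∈ (0,1) and all λ ≥ 8^{(Δ+1)/δ²}, P[Y ≤ (1 − δ/2)·i*(G)] ≤ 2^n · λ^{−δn/(2Δ+2)} / λ^{−i*(G)}·Z_G(λ)^{-1} ≤ 2^n λ^{−δ n/(2Δ+2)}. -/

import Mathlib

open Finset
open scoped Classical

/-- For a claw-free graph `G` with maximum degree at most `Δ` and independence number
`i*(G) ≥ n/(Δ+1)`, the hard-core model at large fugacity `λ ≥ 8^{(Δ+1)/δ²}` puts probability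
at most `2^n·λ^{-δn/(2Δ+2)}` on independent sets of size at most `(1-δ/2)·i*(G)`. -/
theorem stmt9 {V : Type*} [Fintype V] [DecidableEq V] (G : SimpleGraph V)
    [DecidableRel G.Adj] (Δ : ℕ) (hdeg : ∀ v, G.degree v ≤ Δ)
    (hclaw : ∀ v a b c : V, G.Adj v a → G.Adj v b → G.Adj v c →
      a ≠ b → a ≠ c → b ≠ c → (G.Adj a b ∨ G.Adj a c ∨ G.Adj b c))
    (ind : Finset (Finset V))
    (hind : ind = Finset.univ.filter (fun S : Finset V => ∀ u ∈ S, ∀ v ∈ S, ¬ G.Adj u v))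
    (istar : ℕ) (histar₁ : ∃ S ∈ ind, S.card = istar) (histar₂ : ∀ S ∈ ind, S.card ≤ istar)
    (histar₃ : (Fintype.card V : ℝ) / (Δ + 1) ≤ istar) :
    ∀ δ ∈ Set.Ioo (0 : ℝ) 1, ∀ lam : ℝ, (8 : ℝ) ^ (((Δ : ℝ) + 1) / δ ^ 2) ≤ lam →
      (∑ S ∈ ind, if (S.card : ℝ) ≤ (1 - δ / 2) * istar then lam ^ S.card else 0)
          / (∑ S ∈ ind, lam ^ S.card)
        ≤ 2 ^ (Fintype.card V) *
            lam ^ (-(δ * (Fintype.card V : ℝ)) / (2 * (Δ : ℝ) + 2)) := by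
  intro δ hδ lam hlam
  obtain ⟨hδ0, hδ1⟩ := hδ
  have hlam1 : (1:ℝ) ≤ lam :=
    le_trans (Real.one_le_rpow (by norm_num) (by positivity)) hlam
  have hlam0 : (0:ℝ) < lam := lt_of_lt_of_le one_pos hlam1
  obtain ⟨S₀, hS₀, hcard⟩ := histar₁
  set n := Fintype.card V with hn
  set num := ∑ S ∈ ind, if (S.card : ℝ) ≤ (1 - δ / 2) * istar then lam ^ S.card else 0 with hnumdef
  set den := ∑ S ∈ ind, lam ^ S.card with hdendef
  have hnum0 : 0 ≤ num := Finset.sum_nonneg fun S _ => by positivity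
  have hpow : (0:ℝ) < lam ^ istar := pow_pos hlam0 _
  have hden : lam ^ istar ≤ den := by
    rw [hdendef, ← hcard]
    exact Finset.single_le_sum (f := fun S => lam ^ S.card)
      (fun S _ => by positivity) hS₀
  have hcardind : (ind.card : ℝ) ≤ 2 ^ n := by
    have := Finset.card_le_univ ind
    rw [Fintype.card_finset] at this
    exact_mod_cast this
  have hnum : num ≤ 2 ^ n * lam ^ ((1 - δ/2) * (istar:ℝ)) := by
    have h1 : num ≤ ∑ _S ∈ ind, lam ^ ((1 - δ/2) * (istar:ℝ)) := by
      apply Finset.sum_le_sum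
      intro S hS
      split
      · next h =>
        calc lam ^ S.card = lam ^ (S.card : ℝ) := (Real.rpow_natCast lam S.card).symm
          _ ≤ lam ^ ((1 - δ/2) * (istar:ℝ)) := Real.rpow_le_rpow_of_exponent_le hlam1 h
      · positivity
    have h2 : ∑ _S ∈ ind, lam ^ ((1 - δ/2) * (istar:ℝ)) =
        (ind.card : ℝ) * lam ^ ((1 - δ/2) * (istar:ℝ)) := by
      rw [Finset.sum_const, nsmul_eq_mul]
    refine h1.trans (h2.le.trans ?_)
    have hrp : (0:ℝ) ≤ lam ^ ((1 - δ/2) * (istar:ℝ)) := Real.rpow_nonneg hlam0.le _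
    exact mul_le_mul_of_nonneg_right hcardind hrp
  have step1 : num / den ≤ num / lam ^ istar :=
    div_le_div_of_nonneg_left hnum0 hpow hden
  have step2 : num / lam ^ istar ≤ 2 ^ n * lam ^ ((1 - δ/2) * (istar:ℝ)) / lam ^ istar :=
    by gcongr
  have step3 : 2 ^ n * lam ^ ((1 - δ/2) * (istar:ℝ)) / lam ^ istar
      = 2 ^ n * lam ^ ((1 - δ/2) * (istar:ℝ) - (istar:ℝ)) := by
    rw [mul_div_assoc, ← Real.rpow_natCast lam istar, ← Real.rpow_sub hlam0]
  have step4 : (2:ℝ) ^ n * lam ^ ((1 - δ/2) * (istar:ℝ) - (istar:ℝ))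
      ≤ 2 ^ n * lam ^ (-(δ * (n:ℝ)) / (2 * (Δ:ℝ) + 2)) := by
    apply mul_le_mul_of_nonneg_left _ (by positivity)
    apply Real.rpow_le_rpow_of_exponent_le hlam1
    have hΔ : (0:ℝ) < (Δ:ℝ) + 1 := by positivity
    have h : (n:ℝ) / ((Δ:ℝ) + 1) ≤ (istar:ℝ) := histar₃
    have h2 := mul_le_mul_of_nonneg_left h (by positivity : (0:ℝ) ≤ δ / 2)
    have h3 : -(δ * (n:ℝ)) / (2 * (Δ:ℝ) + 2) = -(δ / 2 * ((n:ℝ) / ((Δ:ℝ) + 1))) := by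
      field_simp
    nlinarith [h2, h3]
  calc num / den ≤ num / lam ^ istar := step1
    _ ≤ 2 ^ n * lam ^ ((1 - δ/2) * (istar:ℝ)) / lam ^ istar := step2
    _ = 2 ^ n * lam ^ ((1 - δ/2) * (istar:ℝ) - (istar:ℝ)) := step3
    _ ≤ 2 ^ n * lam ^ (-(δ * (n:ℝ)) / (2 * (Δ:ℝ) + 2)) := step4
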